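/- Existence of minimizers of the Tikhonov functional: let F : H → Y be a weakly sequentially closed map between Hilbert spaces H and Y, h ∈ Y, α > 0, and J(x) = ½‖F(x) − h‖²_Y + (α/2)‖x‖²_H. Then J attains its infimum on H, i.e., there exists x* ∈ H with J(x*) = inf_{x∈H} J(x). -/

import Mathlib

open Filter Topology

noncomputable section

/-- Weak convergence of a sequence in an inner ℝ product space, tested against
inner products with arbitrary vectors. -/
def WeakConv {H : Type*} [NormedAddCommGroup H] [InnerProductSpace ℝ H]
    (x : ℕ → H) (x₀ : H) : Prop :=
  ∀ z : H, Tendsto (fun k => (inner ℝ (x k) z : ℝ)) atTop (𝓝 (inner ℝ x₀ z : ℝ))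

theorem weak_seq_compact {H : Type*} [NormedAddCommGroup H] [InnerProductSpace ℝ H]
    [CompleteSpace H] (x : ℕ → H) (R : ℝ) (hR : ∀ k, ‖x k‖ ≤ R) :
    ∃ φ : ℕ → ℕ, StrictMono φ ∧ ∃ x₀ : H, WeakConv (fun k => x (φ k)) x₀ := by
  have hR0 : 0 ≤ R := le_trans (norm_nonneg _) (hR 0)
  -- countable dense sequence in the closed span of the range of x
  have hsep : TopologicalSpace.IsSeparable (Submodule.span ℝ (Set.range x) : Set H) :=
    (Set.countable_range x).isSeparable.span
  obtain ⟨D, Dcount, hD⟩ := hsep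
  obtain ⟨z, hz⟩ : ∃ z : ℕ → H, insert (0:H) D = Set.range z :=
    ((Dcount.insert 0).exists_eq_range (Set.insert_nonempty _ _))
  -- the closed subspace K
  set K : Submodule ℝ H := (Submodule.span ℝ (Set.range x)).topologicalClosure with hK
  have hxK : ∀ k, x k ∈ K := fun k =>
    Submodule.le_topologicalClosure _ (Submodule.subset_span (Set.mem_range_self k))
  have hKsub : (K : Set H) ⊆ closure (Set.range z) := by
    have h1 : (K : Set H) ⊆ closure (Submodule.span ℝ (Set.range x) : Set H) := by
      simp [hK, Submodule.topologicalClosure_coe]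
    refine h1.trans ((closure_mono hD).trans ?_)
    rw [closure_closure]
    exact closure_mono (by rw [← hz]; exact Set.subset_insert _ _)
  haveI : CompleteSpace K :=
    (Submodule.span ℝ (Set.range x)).isClosed_topologicalClosure.completeSpace_coe
  -- diagonal extraction on the countable family z
  set S : Set (ℕ → ℝ) := Set.pi Set.univ (fun n => Set.Icc (-(R * ‖z n‖)) (R * ‖z n‖)) with hS
  have hScomp : IsCompact S := isCompact_univ_pi fun n => isCompact_Icc
  have hmem : ∀ k, (fun n => (inner ℝ (x k) (z n) : ℝ)) ∈ S := by
    intro k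
    refine Set.mem_univ_pi.2 fun n => ?_
    have h2 : |(inner ℝ (x k) (z n) : ℝ)| ≤ R * ‖z n‖ :=
      (abs_real_inner_le_norm (x k) (z n)).trans
        (mul_le_mul_of_nonneg_right (hR k) (norm_nonneg _))
    exact abs_le.1 h2
  obtain ⟨g, -, φ, hφ, hconv⟩ := hScomp.isSeqCompact hmem
  have hgn : ∀ n, Tendsto (fun k => (inner ℝ (x (φ k)) (z n) : ℝ)) atTop (𝓝 (g n)) :=
    fun n => (tendsto_pi_nhds.1 hconv) n
  -- for every w, the sequence of inner products is Cauchy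
  have hcauchy : ∀ w : H, CauchySeq (fun k => (inner ℝ (x (φ k)) w : ℝ)) := by
    intro w
    set Pw : H := (K.orthogonalProjection w : H) with hPw
    have hinner_eq : ∀ k, (inner ℝ (x k) w : ℝ) = inner ℝ (x k) Pw := by
      intro k
      have horth : w - Pw ∈ Kᗮ := Submodule.sub_starProjection_mem_orthogonal (K := K) w
      have h0 : (inner ℝ (x k) (w - Pw) : ℝ) = 0 :=
        (Submodule.mem_orthogonal K _).1 horth (x k) (hxK k)
      have := inner_sub_right (𝕜 := ℝ) (x k) w Pw
      rw [this] at h0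
      linarith
    rw [Metric.cauchySeq_iff]
    intro ε hε
    -- choose n with ‖z n - Pw‖ small
    have hPwK : Pw ∈ closure (Set.range z) := hKsub (K.orthogonalProjection w).2
    have hδ : 0 < ε / (4 * (R + 1)) := by positivity
    obtain ⟨p, ⟨n, rfl⟩, hp⟩ := Metric.mem_closure_iff.1 hPwK _ hδ
    have hdist : ‖Pw - z n‖ < ε / (4 * (R + 1)) := by
      rw [← dist_eq_norm]; exact hp
    -- the sequence against z n is Cauchy
    obtain ⟨N, hN⟩ := Metric.cauchySeq_iff.1 (hgn n).cauchySeq (ε / 2) (by positivity)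
    refine ⟨N, fun j hj i hi => ?_⟩
    have key : ∀ m, (inner ℝ (x (φ m)) w : ℝ)
        = inner ℝ (x (φ m)) (z n) + inner ℝ (x (φ m)) (Pw - z n) := by
      intro m
      rw [hinner_eq (φ m), ← inner_add_right]
      congr 1; abel
    have hsmall : ∀ m, |(inner ℝ (x (φ m)) (Pw - z n) : ℝ)| ≤ R * (ε / (4 * (R + 1))) := by
      intro m
      refine (abs_real_inner_le_norm _ _).trans ?_
      exact mul_le_mul (hR _) hdist.le (norm_nonneg _) hR0
    have hRe : R * (ε / (4 * (R + 1))) ≤ ε / 4 := by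
      have e1 : (R + 1) * (ε / (4 * (R + 1))) = ε / 4 := by
        field_simp
      nlinarith [mul_le_mul_of_nonneg_right (show R ≤ R + 1 by linarith) hδ.le]
    have h1 := hN j hj i hi
    rw [Real.dist_eq] at h1 ⊢
    rw [key j, key i]
    set a := (inner ℝ (x (φ j)) (z n) : ℝ)
    set b := (inner ℝ (x (φ i)) (z n) : ℝ)
    set c := (inner ℝ (x (φ j)) (Pw - z n) : ℝ)
    set d := (inner ℝ (x (φ i)) (Pw - z n) : ℝ)
    have hc := hsmall j
    have hd := hsmall i
    have habs : |a + c - (b + d)| ≤ |a - b| + |c| + |d| := by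
      have e2 : a + c - (b + d) = ((a - b) + c) + (-d) := by ring
      rw [e2]
      refine (abs_add_le _ _).trans ?_
      rw [abs_neg]
      exact add_le_add_left (abs_add_le _ _) _
    have hc' : |c| ≤ ε / 4 := hc.trans hRe
    have hd' : |d| ≤ ε / 4 := hd.trans hRe
    linarith
  -- limits of the inner products exist
  have hlim : ∀ w : H, ∃ a : ℝ, Tendsto (fun k => (inner ℝ (x (φ k)) w : ℝ)) atTop (𝓝 a) :=
    fun w => cauchySeq_tendsto_of_complete (hcauchy w)
  choose L hL using hlim
  have hadd : ∀ w v, L (w + v) = L w + L v := by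
    intro w v
    have h1 : Tendsto (fun k => (inner ℝ (x (φ k)) w : ℝ) + inner ℝ (x (φ k)) v) atTop
        (𝓝 (L w + L v)) := (hL w).add (hL v)
    have h2 : (fun k => (inner ℝ (x (φ k)) (w + v) : ℝ))
        = fun k => (inner ℝ (x (φ k)) w : ℝ) + inner ℝ (x (φ k)) v := by
      funext k; exact inner_add_right _ _ _
    exact tendsto_nhds_unique (h2 ▸ hL (w + v)) h1
  have hsmul : ∀ (c : ℝ) (w : H), L (c • w) = c * L w := by
    intro c w
    have h1 : Tendsto (fun k => c * (inner ℝ (x (φ k)) w : ℝ)) atTop (𝓝 (c * L w)) :=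
      (hL w).const_mul c
    have h2 : (fun k => (inner ℝ (x (φ k)) (c • w) : ℝ))
        = fun k => c * (inner ℝ (x (φ k)) w : ℝ) := by
      funext k; exact real_inner_smul_right _ _ _
    exact tendsto_nhds_unique (h2 ▸ hL (c • w)) h1
  have hbound : ∀ w, |L w| ≤ R * ‖w‖ := by
    intro w
    refine le_of_tendsto (hL w).abs (Filter.Eventually.of_forall fun k => ?_)
    exact (abs_real_inner_le_norm _ _).trans
      (mul_le_mul_of_nonneg_right (hR _) (norm_nonneg _))
  let Llin : H →ₗ[ℝ] ℝ :=
    { toFun := L, map_add' := hadd, map_smul' := by intro c w; simpa using hsmul c w }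
  let ℓ : H →L[ℝ] ℝ := LinearMap.mkContinuous Llin R (by
    intro w
    rw [Real.norm_eq_abs]
    exact hbound w)
  refine ⟨φ, hφ, (InnerProductSpace.toDual ℝ H).symm ℓ, fun w => ?_⟩
  have hx0 : (inner ℝ ((InnerProductSpace.toDual ℝ H).symm ℓ) w : ℝ) = ℓ w :=
    InnerProductSpace.toDual_symm_apply
  rw [hx0]
  exact hL w

theorem tikhonov_functional_attains_infimum
    {H Y : Type*} [NormedAddCommGroup H] [InnerProductSpace ℝ H] [CompleteSpace H]
    [NormedAddCommGroup Y] [InnerProductSpace ℝ Y] [CompleteSpace Y]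
    (F : H → Y)
    -- F is weakly sequentially closed
    (hF : ∀ (x : ℕ → H) (x₀ : H) (y : Y),
      WeakConv x x₀ → WeakConv (fun k => F (x k)) y → y = F x₀)
    (h : Y) (α : ℝ) (hα : 0 < α)
    (J : H → ℝ)
    (hJ : ∀ x : H, J x = (1 / 2) * ‖F x - h‖ ^ 2 + (α / 2) * ‖x‖ ^ 2) :
    ∃ xstar : H, ∀ x : H, J xstar ≤ J x := by
  have hJ0 : ∀ x, 0 ≤ J x := by intro x; rw [hJ]; positivity
  have hbdd : BddBelow (Set.range J) := ⟨0, by rintro _ ⟨x, rfl⟩; exact hJ0 x⟩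
  haveI : Nonempty H := ⟨0⟩
  set m := ⨅ x : H, J x with hm
  have hmle : ∀ x, m ≤ J x := fun x => ciInf_le hbdd x
  have hm0 : 0 ≤ m := le_ciInf hJ0
  have hmin : ∀ k : ℕ, ∃ u : H, J u < m + 1 / (k + 1) := by
    intro k
    refine exists_lt_of_ciInf_lt ?_
    have : (0:ℝ) < 1 / (k + 1) := by positivity
    linarith
  choose u hu using hmin
  have humb : ∀ k, J (u k) < m + 1 := by
    intro k
    have h1 : (1:ℝ) / (k + 1) ≤ 1 := by
      rw [div_le_one (by positivity)]
      have : (0:ℝ) ≤ (k:ℝ) := Nat.cast_nonneg k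
      linarith
    linarith [hu k]
  set R1 := Real.sqrt (2 * (m + 1) / α) with hR1
  have hRu : ∀ k, ‖u k‖ ≤ R1 := by
    intro k
    have h1 : (α / 2) * ‖u k‖ ^ 2 ≤ J (u k) := by
      rw [hJ]; nlinarith [sq_nonneg ‖F (u k) - h‖]
    have h2 : ‖u k‖ ^ 2 ≤ 2 * (m + 1) / α := by
      rw [le_div_iff₀ hα]
      nlinarith [humb k]
    calc ‖u k‖ = Real.sqrt (‖u k‖ ^ 2) := (Real.sqrt_sq (norm_nonneg _)).symm
      _ ≤ R1 := Real.sqrt_le_sqrt h2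
  set R2 := Real.sqrt (2 * (m + 1)) + ‖h‖ with hR2
  have hRF : ∀ k, ‖F (u k)‖ ≤ R2 := by
    intro k
    have h1 : ‖F (u k) - h‖ ≤ Real.sqrt (2 * (m + 1)) := by
      rw [← Real.sqrt_sq (norm_nonneg (F (u k) - h))]
      apply Real.sqrt_le_sqrt
      have := humb k
      rw [hJ] at this
      nlinarith [sq_nonneg ‖u k‖]
    calc ‖F (u k)‖ = ‖(F (u k) - h) + h‖ := by rw [sub_add_cancel]
      _ ≤ ‖F (u k) - h‖ + ‖h‖ := norm_add_le _ _
      _ ≤ R2 := add_le_add_left h1 _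
  obtain ⟨φ₁, hφ₁, x₀, hx₀⟩ := weak_seq_compact u R1 hRu
  obtain ⟨φ₂, hφ₂, y₀, hy₀⟩ :=
    weak_seq_compact (fun k => F (u (φ₁ k))) R2 (fun k => hRF _)
  set ψ : ℕ → ℕ := φ₁ ∘ φ₂ with hψdef
  have hψ : StrictMono ψ := hφ₁.comp hφ₂
  have hxψ : WeakConv (fun k => u (ψ k)) x₀ := by
    intro z
    exact (hx₀ z).comp hφ₂.tendsto_atTop
  have hyψ : WeakConv (fun k => F (u (ψ k))) y₀ := hy₀
  have hy : y₀ = F x₀ := hF (fun k => u (ψ k)) x₀ y₀ hxψ hyψ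
  have hJconv : Tendsto (fun k => J (u (ψ k))) atTop (𝓝 m) := by
    have hup : Tendsto (fun k : ℕ => m + 1 / ((k:ℝ) + 1)) atTop (𝓝 m) := by
      have := tendsto_one_div_add_atTop_nhds_zero_nat (𝕜 := ℝ)
      simpa using (tendsto_const_nhds (x := m)).add this
    refine tendsto_of_tendsto_of_tendsto_of_le_of_le tendsto_const_nhds hup
      (fun k => hmle _) (fun k => ?_)
    have h1 : J (u (ψ k)) < m + 1 / ((ψ k : ℝ) + 1) := hu (ψ k)
    have h2 : (1:ℝ) / ((ψ k : ℝ) + 1) ≤ 1 / ((k:ℝ) + 1) := by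
      apply one_div_le_one_div_of_le (by positivity)
      have hk : k ≤ ψ k := hψ.le_apply
      have : ((k:ℝ)) ≤ (ψ k : ℝ) := Nat.cast_le.2 hk
      linarith
    linarith
  set g := F x₀ - h with hg
  have hc1 : Tendsto (fun k => (inner ℝ (F (u (ψ k)) - h) g : ℝ)) atTop
      (𝓝 (inner ℝ g g : ℝ)) := by
    have h1 := hyψ g
    rw [hy] at h1
    have h2 : Tendsto (fun k => (inner ℝ (F (u (ψ k))) g : ℝ) - inner ℝ h g) atTop
        (𝓝 ((inner ℝ (F x₀) g : ℝ) - inner ℝ h g)) := h1.sub tendsto_const_nhds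
    have e1 : (fun k => (inner ℝ (F (u (ψ k)) - h) g : ℝ))
        = fun k => (inner ℝ (F (u (ψ k))) g : ℝ) - inner ℝ h g := by
      funext k; exact inner_sub_left _ _ _
    have e2 : (inner ℝ g g : ℝ) = (inner ℝ (F x₀) g : ℝ) - inner ℝ h g := by
      rw [hg]; exact inner_sub_left _ _ _
    rw [e1, e2]
    exact h2
  have hc2 : Tendsto (fun k => (inner ℝ (u (ψ k)) x₀ : ℝ)) atTop
      (𝓝 (inner ℝ x₀ x₀ : ℝ)) := hxψ x₀
  have hineq : ∀ k,
      (1/2) * (2 * (inner ℝ (F (u (ψ k)) - h) g : ℝ) - ‖g‖ ^ 2)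
        + (α/2) * (2 * (inner ℝ (u (ψ k)) x₀ : ℝ) - ‖x₀‖ ^ 2) ≤ J (u (ψ k)) := by
    intro k
    rw [hJ]
    have e1 := norm_sub_sq_real (F (u (ψ k)) - h) g
    have e2 := norm_sub_sq_real (u (ψ k)) x₀
    nlinarith [sq_nonneg ‖F (u (ψ k)) - h - g‖, sq_nonneg ‖u (ψ k) - x₀‖]
  have hLHS : Tendsto (fun k =>
      (1/2) * (2 * (inner ℝ (F (u (ψ k)) - h) g : ℝ) - ‖g‖ ^ 2)
        + (α/2) * (2 * (inner ℝ (u (ψ k)) x₀ : ℝ) - ‖x₀‖ ^ 2)) atTop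
      (𝓝 ((1/2) * (2 * (inner ℝ g g : ℝ) - ‖g‖ ^ 2)
        + (α/2) * (2 * (inner ℝ x₀ x₀ : ℝ) - ‖x₀‖ ^ 2))) := by
    exact ((((hc1.const_mul 2).sub_const _).const_mul (1/2)).add
      (((hc2.const_mul 2).sub_const _).const_mul (α/2)))
  have hval : (1/2) * (2 * (inner ℝ g g : ℝ) - ‖g‖ ^ 2)
      + (α/2) * (2 * (inner ℝ x₀ x₀ : ℝ) - ‖x₀‖ ^ 2) = J x₀ := by
    rw [hJ, ← hg, real_inner_self_eq_norm_sq, real_inner_self_eq_norm_sq]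
    ring
  have hfin : J x₀ ≤ m := by
    rw [← hval]
    exact le_of_tendsto_of_tendsto' hLHS hJconv hineq
  exact ⟨x₀, fun x => hfin.trans (hmle x)⟩

end
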